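/- Let k ≥ 3, λ = (k-2)/4, and let γ = (a,b) : [R,0] → ℝ² be a unit speed curve with a > 0, κ = -λσ (where κ = a'b'' - a''b', σ = b'/a), a' > 0 on (R,0], and a'(R) = 0. Then σ is monotonically decreasing on (R, 0]; in particular σ(s) ≥ σ(0) for all s ∈ [R, 0]. -/

import Mathlib

/-- Monotonicity claim from Corollary 4.12: along a unit speed curve γ = (a,b)
on [R,0] with a > 0, b' > 0, curvature κ = -λσ (λ = (k-2)/4, σ = b'/a),
a' > 0 on (R,0] and a'(R) = 0, the function σ is monotonically decreasing on
(R,0]; in particular σ ≥ σ(0) on [R,0]. -/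
theorem stmt_19 (k : ℕ) (hk : 3 ≤ k) (lam : ℝ) (hlam : lam = ((k : ℝ) - 2) / 4)
    (R : ℝ) (hR : R < 0)
    (a b a' b' a'' b'' : ℝ → ℝ)
    (hda : ∀ s ∈ Set.Icc R 0, HasDerivAt a (a' s) s)
    (hdb : ∀ s ∈ Set.Icc R 0, HasDerivAt b (b' s) s)
    (hda' : ∀ s ∈ Set.Icc R 0, HasDerivAt a' (a'' s) s)
    (hdb' : ∀ s ∈ Set.Icc R 0, HasDerivAt b' (b'' s) s)
    (hunit : ∀ s ∈ Set.Icc R 0, (a' s) ^ 2 + (b' s) ^ 2 = 1)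
    (hapos : ∀ s ∈ Set.Icc R 0, 0 < a s)
    (hbpos : ∀ s ∈ Set.Icc R 0, 0 < b' s)
    (hκ : ∀ s ∈ Set.Icc R 0,
      a' s * b'' s - a'' s * b' s = -lam * (b' s / a s))
    (ha' : ∀ s ∈ Set.Ioc R 0, 0 < a' s) (ha'R : a' R = 0) :
    AntitoneOn (fun s => b' s / a s) (Set.Ioc R 0) ∧
      ∀ s ∈ Set.Icc R 0, b' 0 / a 0 ≤ b' s / a s := by
  have hlam0 : 0 ≤ lam := by
    rw [hlam]
    have : (3:ℝ) ≤ (k:ℝ) := by exact_mod_cast hk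
    linarith
  have hf' : ∀ s ∈ Set.Icc R 0, HasDerivAt (fun s => b' s / a s)
      ((b'' s * a s - b' s * a' s) / (a s) ^ 2) s := fun s hs =>
    (hdb' s hs).div (hda s hs) (ne_of_gt (hapos s hs))
  have hanti : AntitoneOn (fun s => b' s / a s) (Set.Icc R 0) := by
    apply antitoneOn_of_deriv_nonpos (convex_Icc R 0)
    · exact fun s hs => (hf' s hs).continuousAt.continuousWithinAt
    · rw [interior_Icc]
      exact fun s hs =>
        ((hf' s (Set.Ioo_subset_Icc_self hs)).differentiableAt).differentiableWithinAt
    · rw [interior_Icc]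
      intro s hs
      have hs' : s ∈ Set.Icc R 0 := Set.Ioo_subset_Icc_self hs
      rw [(hf' s hs').deriv]
      -- derivative of a'^2 + b'^2 vanishes at interior points
      have h1 : HasDerivAt (fun t => a' t ^ 2 + b' t ^ 2)
          (2 * a' s * a'' s + 2 * b' s * b'' s) s := by
        have := ((hda' s hs').fun_pow 2).fun_add ((hdb' s hs').fun_pow 2)
        exact this.congr_deriv (by norm_num)
      have hmem : Set.Icc R 0 ∈ nhds s := Icc_mem_nhds hs.1 hs.2
      have heq : (fun t => a' t ^ 2 + b' t ^ 2) =ᶠ[nhds s] fun _ => (1:ℝ) :=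
        Filter.eventually_of_mem hmem hunit
      have h2 : HasDerivAt (fun _ : ℝ => (1:ℝ))
          (2 * a' s * a'' s + 2 * b' s * b'' s) s := h1.congr_of_eventuallyEq heq.symm
      have e1 : a' s * a'' s + b' s * b'' s = 0 := by
        have := h2.unique (hasDerivAt_const s 1)
        linarith
      have e3 := hunit s hs'
      have hane : a s ≠ 0 := ne_of_gt (hapos s hs')
      have e2' : (a' s * b'' s - a'' s * b' s) * a s = -lam * b' s := by
        have e2 := hκ s hs'
        field_simp at e2
        linarith [e2]
      have hb'' : b'' s * a s = -lam * (a' s * b' s) := by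
        linear_combination a' s * e2' + a s * b' s * e1 - a s * b'' s * e3 + a s * b'' s
      have ha's : 0 ≤ a' s := le_of_lt (ha' s ⟨hs.1, le_of_lt hs.2⟩)
      have hb's : 0 < b' s := hbpos s hs'
      apply div_nonpos_of_nonpos_of_nonneg _ (sq_nonneg _)
      nlinarith [hb'', mul_nonneg (mul_nonneg hlam0 ha's) hb's.le]
  refine ⟨hanti.mono Set.Ioc_subset_Icc_self, fun s hs => ?_⟩
  exact hanti hs (Set.right_mem_Icc.mpr hR.le) hs.2
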